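/- (Laplace-envelope sandwich.) For every n ≥ 2 and every β > 0, the rank free energy F_n(β) := log Z_n(β) satisfies S_n(β) ≤ F_n(β) ≤ S_n(β) + log(1 + log n), where S_n(β) := sup_{t≥0} { log N_n(t) − β t } is the Laplace envelope of the counting function. -/

import Mathlib

open Filter MeasureTheory
open scoped ENNReal

/-- Maximum score `z_n^*`. -/
noncomputable def zmax (n : ℕ) (z : Fin n → ℝ) : ℝ := sSup (Set.range z)

/-- Gap `g_{n,j} = z_n^* - z_{n,j}`. -/
noncomputable def gap (n : ℕ) (z : Fin n → ℝ) (j : Fin n) : ℝ := zmax n z - z j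

/-- Cumulative gap-counting function `N_n(t)`. -/
noncomputable def Ncount (n : ℕ) (z : Fin n → ℝ) (t : ℝ) : ℕ :=
  {j : Fin n | gap n z j ≤ t}.ncard

/-- Normalised partition function `Z_n(β)`. -/
noncomputable def Zfun (n : ℕ) (z : Fin n → ℝ) (β : ℝ) : ℝ :=
  ∑ j : Fin n, Real.exp (-(β * gap n z j))

/-- Softmax probabilities `p_{n,j}(β)`. -/
noncomputable def softmaxP (n : ℕ) (z : Fin n → ℝ) (β : ℝ) (j : Fin n) : ℝ :=
  Real.exp (β * z j) / ∑ ℓ : Fin n, Real.exp (β * z ℓ)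

/-- Shannon entropy `H_n(β)`. -/
noncomputable def entropyH (n : ℕ) (z : Fin n → ℝ) (β : ℝ) : ℝ :=
  -∑ j : Fin n, softmaxP n z β j * Real.log (softmaxP n z β j)

/-- The set of values `log N_n(t) / t` over `t > 0`, whose supremum is `Λ_n`. -/
def lamSet (n : ℕ) (z : Fin n → ℝ) : Set ℝ :=
  {r | ∃ t : ℝ, 0 < t ∧ r = Real.log (Ncount n z t) / t}

/-- Second-largest entry of a finite vector (equals the largest in case of ties). -/
noncomputable def secondLargest (n : ℕ) (v : Fin n → ℝ) : ℝ :=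
  sInf (Set.range fun i => sSup (v '' {j | j ≠ i}))

/-- Top-two weight gap `D_n(β)`. -/
noncomputable def Dgap (n : ℕ) (z : Fin n → ℝ) (β : ℝ) : ℝ :=
  sSup (Set.range (softmaxP n z β)) - secondLargest n (softmaxP n z β)

/-- Rank gap `G_n(β) = max_{i,j} |p_{n,i}(β) - p_{n,j}(β)|`. -/
noncomputable def Ggap (n : ℕ) (z : Fin n → ℝ) (β : ℝ) : ℝ :=
  sSup {x | ∃ i j : Fin n, x = |softmaxP n z β i - softmaxP n z β j|}

/-- Resolved accumulation scale `Λ_n^{(r)}` (with `sup ∅ = 0`), valued in `ℝ≥0∞`. -/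
noncomputable def resolvedLam (n : ℕ) (z : Fin n → ℝ) (r : ℝ) : ℝ≥0∞ :=
  ⨆ t ∈ {t : ℝ | 0 < t ∧ r < Real.log (Ncount n z t)},
    ENNReal.ofReal ((Real.log (Ncount n z t) - r) / t)

/-- Laplace envelope `S_n(β) = sup_{t ≥ 0} (log N_n(t) - β t)`. -/
noncomputable def Sfun (n : ℕ) (z : Fin n → ℝ) (β : ℝ) : ℝ :=
  sSup {x | ∃ t : ℝ, 0 ≤ t ∧ x = Real.log (Ncount n z t) - β * t}

/-- Rank boundary `B_n^rank(r) = sup {β ≥ 0 : log Z_n(β) ≥ r}`, valued in `ℝ≥0∞`. -/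
noncomputable def rankBoundary (n : ℕ) (z : Fin n → ℝ) (r : ℝ) : ℝ≥0∞ :=
  ⨆ β ∈ {β : ℝ | 0 ≤ β ∧ r ≤ Real.log (Zfun n z β)}, ENNReal.ofReal β

/-- `X_n ≍ (log n)^ξ`. -/
def IsLogAsymp (X : ℕ → ℝ) (ξ : ℝ) : Prop :=
  ∃ c₁ c₂ : ℝ, 0 < c₁ ∧ c₁ ≤ c₂ ∧
    ∀ᶠ n : ℕ in Filter.atTop,
      c₁ * Real.log n ^ ξ ≤ X n ∧ X n ≤ c₂ * Real.log n ^ ξ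

lemma harmonic_le_one_add_log' (n : ℕ) (hn : 1 ≤ n) :
    ∑ k ∈ Finset.range n, (1:ℝ)/(k+1) ≤ 1 + Real.log n := by
  induction n with
  | zero => omega
  | succ m ih =>
    rcases Nat.eq_zero_or_pos m with hm | hm
    · subst hm; simp
    · have hmain := ih hm
      rw [Finset.sum_range_succ]
      have hlog : (1:ℝ)/(m+1) ≤ Real.log (m+1) - Real.log m := by
        have hm0 : (0:ℝ) < m := by exact_mod_cast hm
        have hx : (0:ℝ) < (m:ℝ)/(m+1) := by positivity
        have := Real.log_le_sub_one_of_pos hx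
        rw [Real.log_div (by positivity) (by positivity)] at this
        have h1 : (m:ℝ)/(m+1) - 1 = -(1/(m+1)) := by field_simp; ring
        linarith [this, h1 ▸ this]
      push_cast
      linarith

theorem stmt14 (n : ℕ) (hn : 2 ≤ n) (z : Fin n → ℝ) (β : ℝ) (hβ : 0 < β) :
    Sfun n z β ≤ Real.log (Zfun n z β) ∧
      Real.log (Zfun n z β) ≤ Sfun n z β + Real.log (1 + Real.log n) := by
  classical
  have hnpos : 0 < n := by omega
  set g := gap n z with hgdef
  have hbdd : BddAbove (Set.range z) := (Set.finite_range z).bddAbove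
  have hgnonneg : ∀ j, 0 ≤ g j := fun j =>
    sub_nonneg.2 (le_csSup hbdd ⟨j, rfl⟩)
  haveI : Nonempty (Fin n) := ⟨⟨0, hnpos⟩⟩
  -- maximiser
  obtain ⟨j0, hj0⟩ : ∃ j0 : Fin n, ∀ i, z i ≤ z j0 :=
    Finite.exists_max z
  have hgj0 : g j0 ≤ 0 := by
    have : zmax n z ≤ z j0 :=
      csSup_le (Set.range_nonempty z) (by rintro x ⟨i, rfl⟩; exact hj0 i)
    simpa [hgdef, gap, sub_nonpos] using this
  -- Ncount as a Finset card
  have hN : ∀ t : ℝ, Ncount n z t = (Finset.univ.filter fun j => g j ≤ t).card := by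
    intro t
    rw [Ncount, Set.ncard_eq_toFinset_card']
    congr 1
    ext j
    simp [hgdef]
  have hZpos : 0 < Zfun n z β :=
    Finset.sum_pos (fun j _ => Real.exp_pos _) ⟨j0, Finset.mem_univ _⟩
  -- N(t) ≥ 1 for t ≥ 0
  have hNpos : ∀ t : ℝ, 0 ≤ t → 1 ≤ (Ncount n z t : ℝ) := by
    intro t ht
    rw [hN]
    have : (Finset.univ.filter fun j => g j ≤ t).Nonempty :=
      ⟨j0, Finset.mem_filter.2 ⟨Finset.mem_univ _, le_trans hgj0 ht⟩⟩
    exact_mod_cast Finset.card_pos.2 this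
  -- core inequality: N(t) e^{-βt} ≤ Z(β)
  have hcore : ∀ t : ℝ, 0 ≤ t →
      (Ncount n z t : ℝ) * Real.exp (-(β * t)) ≤ Zfun n z β := by
    intro t ht
    rw [hN]
    calc ((Finset.univ.filter fun j => g j ≤ t).card : ℝ) * Real.exp (-(β * t))
        = ∑ _j ∈ Finset.univ.filter fun j => g j ≤ t, Real.exp (-(β * t)) := by
          rw [Finset.sum_const, nsmul_eq_mul]
      _ ≤ ∑ j ∈ Finset.univ.filter fun j => g j ≤ t, Real.exp (-(β * g j)) := by
          apply Finset.sum_le_sum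
          intro j hj
          have hjt : g j ≤ t := (Finset.mem_filter.1 hj).2
          exact Real.exp_le_exp.2 (by nlinarith)
      _ ≤ ∑ j : Fin n, Real.exp (-(β * g j)) :=
          Finset.sum_le_sum_of_subset_of_nonneg (Finset.filter_subset _ _)
            (fun i _ _ => (Real.exp_pos _).le)
      _ = Zfun n z β := rfl
  -- each element of the envelope set is ≤ log Z
  set A : Set ℝ := {x | ∃ t : ℝ, 0 ≤ t ∧ x = Real.log (Ncount n z t) - β * t} with hA
  have hAle : ∀ x ∈ A, x ≤ Real.log (Zfun n z β) := by
    rintro x ⟨t, ht, rfl⟩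
    have h1 : (0:ℝ) < (Ncount n z t : ℝ) := lt_of_lt_of_le one_pos (hNpos t ht)
    have : Real.log ((Ncount n z t : ℝ) * Real.exp (-(β * t))) ≤ Real.log (Zfun n z β) :=
      Real.log_le_log (by positivity) (hcore t ht)
    rwa [Real.log_mul (ne_of_gt h1) (Real.exp_ne_zero _), Real.log_exp] at this
  have hAne : A.Nonempty := ⟨Real.log (Ncount n z 0) - β * 0, 0, le_refl _, rfl⟩
  have hAbdd : BddAbove A := ⟨Real.log (Zfun n z β), fun x hx => hAle x hx⟩
  have hSle : Sfun n z β ≤ Real.log (Zfun n z β) := csSup_le hAne hAle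
  refine ⟨hSle, ?_⟩
  -- upper bound
  set S := Sfun n z β with hS
  -- for each j:  exp(-β g j) ≤ exp S / N(g j)
  have hkey : ∀ j : Fin n, Real.exp (-(β * g j)) ≤
      Real.exp S / (Ncount n z (g j) : ℝ) := by
    intro j
    have hc : (0:ℝ) < (Ncount n z (g j) : ℝ) :=
      lt_of_lt_of_le one_pos (hNpos _ (hgnonneg j))
    have hmem : Real.log (Ncount n z (g j)) - β * g j ∈ A :=
      ⟨g j, hgnonneg j, rfl⟩
    have h1 : Real.log (Ncount n z (g j)) - β * g j ≤ S := le_csSup hAbdd hmem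
    have h2 : Real.exp (Real.log (Ncount n z (g j)) - β * g j) ≤ Real.exp S :=
      Real.exp_le_exp.2 h1
    rw [Real.exp_sub, Real.exp_log hc] at h2
    have h3 : (Ncount n z (g j) : ℝ) ≤ Real.exp S * Real.exp (β * g j) := by
      rw [div_le_iff₀ (Real.exp_pos _)] at h2; linarith
    rw [le_div_iff₀ hc, Real.exp_neg]
    calc (Real.exp (β * g j))⁻¹ * (Ncount n z (g j) : ℝ)
        ≤ (Real.exp (β * g j))⁻¹ * (Real.exp S * Real.exp (β * g j)) :=
          mul_le_mul_of_nonneg_left h3 (by positivity)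
      _ = Real.exp S := by field_simp
  -- sort the gaps
  set σ := Tuple.sort g with hσ
  have hmono : Monotone (g ∘ σ) := Tuple.monotone_sort g
  -- rank bound: k + 1 ≤ N(g (σ k))
  have hrank : ∀ k : Fin n, ((k : ℕ) : ℝ) + 1 ≤ (Ncount n z (g (σ k)) : ℝ) := by
    intro k
    rw [hN]
    have hsub : (Finset.Iic k).image σ ⊆ Finset.univ.filter fun j => g j ≤ g (σ k) := by
      intro j hj
      obtain ⟨i, hi, rfl⟩ := Finset.mem_image.1 hj
      exact Finset.mem_filter.2 ⟨Finset.mem_univ _, hmono (Finset.mem_Iic.1 hi)⟩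
    have hcard : ((Finset.Iic k).image σ).card = (k : ℕ) + 1 := by
      rw [Finset.card_image_of_injective _ σ.injective, Fin.card_Iic]
    have := Finset.card_le_card hsub
    rw [hcard] at this
    exact_mod_cast this
  -- sum bound
  have hsum : Zfun n z β ≤ Real.exp S * (1 + Real.log n) := by
    have step1 : Zfun n z β ≤ ∑ j : Fin n, Real.exp S / (Ncount n z (g j) : ℝ) :=
      Finset.sum_le_sum (fun j _ => hkey j)
    have step2 : ∑ j : Fin n, Real.exp S / (Ncount n z (g j) : ℝ)
        = ∑ k : Fin n, Real.exp S / (Ncount n z (g (σ k)) : ℝ) :=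
      (Equiv.sum_comp σ (fun j => Real.exp S / (Ncount n z (g j) : ℝ))).symm
    have step3 : ∑ k : Fin n, Real.exp S / (Ncount n z (g (σ k)) : ℝ)
        ≤ ∑ k : Fin n, Real.exp S * (1 / ((k : ℕ) + 1)) := by
      apply Finset.sum_le_sum
      intro k _
      rw [div_eq_mul_one_div]
      apply mul_le_mul_of_nonneg_left _ (Real.exp_pos S).le
      apply one_div_le_one_div_of_le (by positivity)
      exact hrank k
    have step4 : ∑ k : Fin n, Real.exp S * (1 / ((k : ℕ) + 1))
        = Real.exp S * ∑ k ∈ Finset.range n, (1:ℝ)/(k+1) := by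
      rw [← Finset.mul_sum]
      congr 1
      exact Fin.sum_univ_eq_sum_range (fun k => (1:ℝ)/(k+1)) n
    have step5 : Real.exp S * ∑ k ∈ Finset.range n, (1:ℝ)/(k+1)
        ≤ Real.exp S * (1 + Real.log n) :=
      mul_le_mul_of_nonneg_left (harmonic_le_one_add_log' n (by omega)) (Real.exp_pos S).le
    calc Zfun n z β ≤ _ := step1
      _ = _ := step2
      _ ≤ _ := step3
      _ = _ := step4
      _ ≤ _ := step5
  have hlogn : 0 < 1 + Real.log n := by
    have : (0:ℝ) ≤ Real.log n := Real.log_nonneg (by exact_mod_cast Nat.one_le_of_lt hn)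
    linarith
  have := Real.log_le_log hZpos hsum
  rwa [Real.log_mul (Real.exp_ne_zero _) (ne_of_gt hlogn), Real.log_exp] at this
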